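/- If φ is a dynamic LM-measure that is φ̂-acceptance time consistent with φ̂_t(m) = essinf_{Z∈D_t} E[Zm|F_t] for determining sets D_t, and g : extended reals → reals is increasing and concave, then {g ∘ φ_t} is also φ̂-acceptance time consistent. -/

import Mathlib

open MeasureTheory

lemma concave_support_line (g : ℝ → ℝ) (hgmono : Monotone g)
    (hgconc : ConcaveOn ℝ Set.univ g) (x₀ ε : ℝ) (hε : 0 < ε) :
    ∃ a b : ℝ, 0 ≤ a ∧ (∀ x, g x ≤ a * x + b) ∧ a * x₀ + b ≤ g x₀ + ε := by
  have hneg : ConvexOn ℝ Set.univ (fun x => -g x) := hgconc.neg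
  have hs : ∀ y₁ y₂ : ℝ, y₁ ≤ y₂ → y₁ ≠ x₀ → y₂ ≠ x₀ →
      (g y₂ - g x₀) / (y₂ - x₀) ≤ (g y₁ - g x₀) / (y₁ - x₀) := by
    intro y₁ y₂ h12 h1 h2
    have h := hneg.secant_mono (Set.mem_univ x₀) (Set.mem_univ y₁) (Set.mem_univ y₂) h1 h2 h12
    have e1 : (-g y₁ - -g x₀) / (y₁ - x₀) = -((g y₁ - g x₀) / (y₁ - x₀)) := by ring
    have e2 : (-g y₂ - -g x₀) / (y₂ - x₀) = -((g y₂ - g x₀) / (y₂ - x₀)) := by ring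
    rw [e1, e2] at h
    linarith
  set K := g x₀ - g (x₀ - 1) with hK
  have hK0 : 0 ≤ K := sub_nonneg.2 (hgmono (by linarith))
  set δ := min 1 (ε / (K + 1)) with hδdef
  have hδpos : 0 < δ := lt_min one_pos (div_pos hε (by linarith))
  have hδ1 : δ ≤ 1 := min_le_left _ _
  set a := (g x₀ - g (x₀ - δ)) / δ with ha
  have ha0 : 0 ≤ a := div_nonneg (sub_nonneg.2 (hgmono (by linarith))) hδpos.le
  have ea : (g (x₀ - δ) - g x₀) / ((x₀ - δ) - x₀) = a := by
    rw [ha, show (x₀ - δ) - x₀ = -δ by ring, div_neg]; ring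
  have haK : a ≤ K := by
    have h := hs (x₀ - 1) (x₀ - δ) (by linarith) (by linarith) (by linarith)
    rw [ea] at h
    have e2 : (g (x₀ - 1) - g x₀) / ((x₀ - 1) - x₀) = K := by
      rw [show (x₀ - 1) - x₀ = (-1 : ℝ) by ring, div_neg, div_one, neg_sub, hK]
    rw [e2] at h; exact h
  have haδ : a * δ ≤ ε := by
    have h1 : δ ≤ ε / (K + 1) := min_le_right _ _
    rw [le_div_iff₀ (by linarith : (0:ℝ) < K + 1)] at h1
    nlinarith
  refine ⟨a, g x₀ + a * δ - a * x₀, ha0, ?_, by linarith⟩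
  intro x
  have haδ0 : 0 ≤ a * δ := mul_nonneg ha0 hδpos.le
  rcases lt_trichotomy x x₀ with hx | rfl | hx
  · rcases le_or_gt x (x₀ - δ) with hx2 | hx2
    · have h := hs x (x₀ - δ) hx2 (by linarith) (by linarith)
      rw [ea] at h
      have hden : x - x₀ < 0 := by linarith
      rw [le_div_iff_of_neg hden] at h
      nlinarith
    · have h1 : g x ≤ g x₀ := hgmono hx.le
      nlinarith
  · nlinarith
  · have h := hs (x₀ - δ) x (by linarith) (by linarith) (by linarith)
    rw [ea] at h
    have hden : (0:ℝ) < x - x₀ := by linarith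
    rw [div_le_iff₀ hden] at h
    nlinarith

lemma concave_rat_line (g : ℝ → ℝ) (hgmono : Monotone g)
    (hgconc : ConcaveOn ℝ Set.univ g) (M x₀ ε : ℝ) (hx₀ : |x₀| ≤ M) (hε : 0 < ε) :
    ∃ a b : ℚ, 0 ≤ (a : ℝ) ∧ (∀ x : ℝ, |x| ≤ M → g x ≤ a * x + b) ∧
      (a : ℝ) * x₀ + b ≤ g x₀ + ε := by
  have hM0 : 0 ≤ M := le_trans (abs_nonneg _) hx₀
  obtain ⟨a, b, ha0, hline, hval⟩ := concave_support_line g hgmono hgconc x₀ (ε/4) (by linarith)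
  have hεM : 0 < ε / (8 * (M + 1)) := by positivity
  obtain ⟨a', ha'1, ha'2⟩ := exists_rat_btwn (lt_add_of_pos_right a hεM)
  obtain ⟨b', hb'1, hb'2⟩ := exists_rat_btwn
    (lt_add_of_pos_right (b + ((a' : ℝ) - a) * M) (show (0:ℝ) < ε/4 by linarith))
  have hd : 0 ≤ (a' : ℝ) - a := by linarith
  have hd2 : ((a' : ℝ) - a) * M ≤ ε / 8 := by
    have h1 : ((a' : ℝ) - a) * M ≤ (ε / (8 * (M + 1))) * M :=
      mul_le_mul_of_nonneg_right (by linarith) hM0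
    have h2 : (ε / (8 * (M + 1))) * M ≤ ε / 8 := by
      rw [div_mul_eq_mul_div, div_le_div_iff₀ (by linarith) (by norm_num)]
      nlinarith
    linarith
  refine ⟨a', b', by linarith, ?_, ?_⟩
  · intro x hxM
    have hx1 : -M ≤ x := neg_le_of_abs_le hxM
    have h3 : ((a' : ℝ) - a) * (-M) ≤ ((a' : ℝ) - a) * x := mul_le_mul_of_nonneg_left hx1 hd
    have h4 := hline x
    nlinarith
  · have hx2 : x₀ ≤ M := le_of_abs_le hx₀
    have h5 : ((a' : ℝ) - a) * x₀ ≤ ((a' : ℝ) - a) * M := mul_le_mul_of_nonneg_left hx2 hd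
    nlinarith

lemma concave_pointwise_le (g : ℝ → ℝ) (hgmono : Monotone g)
    (hgconc : ConcaveOn ℝ Set.univ g) (M x₀ v : ℝ) (hx₀ : |x₀| ≤ M)
    (H : ∀ a b : ℚ, 0 ≤ (a : ℝ) → (∀ x : ℝ, |x| ≤ M → g x ≤ a * x + b) →
      v ≤ a * x₀ + b) : v ≤ g x₀ := by
  refine le_of_forall_pos_le_add ?_
  intro ε hε
  obtain ⟨a, b, ha0, hline, hval⟩ := concave_rat_line g hgmono hgconc M x₀ ε hx₀ hε
  exact (H a b ha0 hline).trans hval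

/-- If a dynamic LM-measure `φ` is `φ̂`-acceptance time consistent, where
`φ̂_t(m) = essinf_{Z ∈ D_t} E[Z·m|F_t]` for determining sets `D_t`, and `g` is
increasing and concave, then `g ∘ φ` is also `φ̂`-acceptance time consistent. -/
theorem robust_acceptance_concave_invariant
    {Ω : Type*} {F : MeasurableSpace Ω} (𝓕 : ℕ → MeasurableSpace Ω)
    (h𝓕 : ∀ t, 𝓕 t ≤ F) (hmono𝓕 : ∀ t s, t ≤ s → 𝓕 t ≤ 𝓕 s)
    (μ : Measure Ω) [IsProbabilityMeasure μ] (T : ℕ)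
    (D : ℕ → Set (Ω → ℝ))
    (hDne : ∀ t, (D t).Nonempty)
    (hD : ∀ t, ∀ Z ∈ D t, Integrable Z μ ∧ (0 ≤ᵐ[μ] Z) ∧
      μ[Z|𝓕 t] =ᵐ[μ] fun _ => (1 : ℝ))
    -- `φhat t m` is the robust expectation `essinf_{Z ∈ D t} E[Z·m|F_t]`
    -- (the a.e.-greatest lower bound of the family)
    (φhat : ℕ → (Ω → ℝ) → Ω → ℝ)
    (hφhat : ∀ t (m : Ω → ℝ), Measurable m → (∃ C : ℝ, ∀ ω, |m ω| ≤ C) →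
      (∀ Z ∈ D t, φhat t m ≤ᵐ[μ] μ[fun ω => Z ω * m ω|𝓕 t]) ∧
      (∀ W : Ω → ℝ, (∀ Z ∈ D t, W ≤ᵐ[μ] μ[fun ω => Z ω * m ω|𝓕 t]) →
        W ≤ᵐ[μ] φhat t m))
    -- the dynamic LM-measure `φ`
    (φ : ℕ → (Ω → ℝ) → Ω → ℝ)
    (hφmeas : ∀ t X, Measurable (φ t X))
    (hφbdd : ∀ t X, ∃ C : ℝ, ∀ ω, |φ t X ω| ≤ C)
    -- `g` increasing and concave
    (g : ℝ → ℝ) (hgmono : Monotone g) (hgconc : ConcaveOn ℝ Set.univ g)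
    -- `φ` is `φhat`-acceptance time consistent
    (hTC : ∀ t s, t < s → s ≤ T → ∀ X : Ω → ℝ, φhat t (φ s X) ≤ᵐ[μ] φ t X) :
    ∀ t s, t < s → s ≤ T → ∀ X : Ω → ℝ,
      φhat t (fun ω => g (φ s X ω)) ≤ᵐ[μ] fun ω => g (φ t X ω) := by
  intro t s hts hsT X
  obtain ⟨C, hC⟩ := hφbdd s X
  obtain ⟨Ct, hCt⟩ := hφbdd t X
  set M : ℝ := max C Ct with hM
  have hCM : ∀ ω, |φ s X ω| ≤ M := fun ω => (hC ω).trans (le_max_left _ _)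
  have hCtM : ∀ ω, |φ t X ω| ≤ M := fun ω => (hCt ω).trans (le_max_right _ _)
  set h : Ω → ℝ := fun ω => g (φ s X ω) with hh
  have hhmeas : Measurable h := (hgmono.measurable).comp (hφmeas s X)
  set Cg : ℝ := max |g M| |g (-M)| with hCg
  have hhbdd : ∀ ω, |h ω| ≤ Cg := by
    intro ω
    have h1 : h ω ≤ g M := hgmono (le_of_abs_le (hCM ω))
    have h2 : g (-M) ≤ h ω := hgmono (neg_le_of_abs_le (hCM ω))
    rw [abs_le]
    constructor
    · calc -Cg ≤ -|g (-M)| := by simp [hCg]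
        _ ≤ g (-M) := neg_abs_le _
        _ ≤ h ω := h2
    · exact h1.trans ((le_abs_self _).trans (le_max_left _ _))
  obtain ⟨hub_h, hlb_h⟩ := hφhat t h hhmeas ⟨Cg, hhbdd⟩
  obtain ⟨hub_m, hlb_m⟩ := hφhat t (φ s X) (hφmeas s X) ⟨C, hC⟩
  -- key per-line estimate
  have key : ∀ a b : ℚ, 0 ≤ (a : ℝ) → (∀ x : ℝ, |x| ≤ M → g x ≤ a * x + b) →
      φhat t h ≤ᵐ[μ] fun ω => (a : ℝ) * φ t X ω + b := by
    intro a b ha hline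
    -- step 1: for each Z, φhat t h ≤ a * E[Z m|F_t] + b a.e.
    have step1 : ∀ Z ∈ D t,
        φhat t h ≤ᵐ[μ] fun ω => (a : ℝ) * (μ[fun ω => Z ω * φ s X ω|𝓕 t]) ω + b := by
      intro Z hZ
      obtain ⟨hZint, hZpos, hZone⟩ := hD t Z hZ
      have hZm : Integrable (fun ω => Z ω * φ s X ω) μ := by
        have := hZint.bdd_mul (hφmeas s X).aestronglyMeasurable
          (c := C) (Filter.Eventually.of_forall fun ω => by simpa [Real.norm_eq_abs] using hC ω)
        simpa [mul_comm] using this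
      have hZh : Integrable (fun ω => Z ω * h ω) μ := by
        have := hZint.bdd_mul hhmeas.aestronglyMeasurable
          (c := Cg) (Filter.Eventually.of_forall fun ω => by simpa [Real.norm_eq_abs] using hhbdd ω)
        simpa [mul_comm] using this
      have hZq : Integrable (fun ω => Z ω * ((a : ℝ) * φ s X ω + b)) μ := by
        have hq : Integrable (fun ω => ((a : ℝ) * φ s X ω + b) * Z ω) μ :=
          hZint.bdd_mul ((measurable_const.mul (hφmeas s X)).add
            measurable_const).aestronglyMeasurable
            (c := |(a : ℝ)| * C + |(b : ℝ)|) (Filter.Eventually.of_forall fun ω => by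
              rw [Real.norm_eq_abs]
              calc |(a : ℝ) * φ s X ω + b| ≤ |(a : ℝ) * φ s X ω| + |(b : ℝ)| := abs_add_le _ _
                _ = |(a : ℝ)| * |φ s X ω| + |(b : ℝ)| := by rw [abs_mul]
                _ ≤ |(a : ℝ)| * C + |(b : ℝ)| := by
                    have := mul_le_mul_of_nonneg_left (hC ω) (abs_nonneg (a : ℝ))
                    linarith)
        simpa [mul_comm] using hq
      have hmono : (fun ω => Z ω * h ω) ≤ᵐ[μ] fun ω => Z ω * ((a : ℝ) * φ s X ω + b) := by
        filter_upwards [hZpos] with ω hZω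
        exact mul_le_mul_of_nonneg_left (hline (φ s X ω) (hCM ω)) hZω
      have hce1 : μ[fun ω => Z ω * h ω|𝓕 t] ≤ᵐ[μ]
          μ[fun ω => Z ω * ((a : ℝ) * φ s X ω + b)|𝓕 t] := condExp_mono hZh hZq hmono
      have heq : (fun ω => Z ω * ((a : ℝ) * φ s X ω + b)) =
          ((a : ℝ) • fun ω => Z ω * φ s X ω) + ((b : ℝ) • Z) := by
        funext ω; simp [smul_eq_mul]; ring
      have hce2 : μ[fun ω => Z ω * ((a : ℝ) * φ s X ω + b)|𝓕 t] =ᵐ[μ]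
          fun ω => (a : ℝ) * (μ[fun ω => Z ω * φ s X ω|𝓕 t]) ω + b := by
        rw [heq]
        refine (condExp_add (hZm.smul (a : ℝ)) (hZint.smul (b : ℝ)) (𝓕 t)).trans ?_
        have h1 := condExp_smul (μ := μ) (m := 𝓕 t) (a : ℝ) (fun ω => Z ω * φ s X ω)
        have h2 := condExp_smul (μ := μ) (m := 𝓕 t) (b : ℝ) Z
        filter_upwards [h1, h2, hZone] with ω hω1 hω2 hω3
        simp only [Pi.add_apply, Pi.smul_apply, smul_eq_mul] at *
        rw [hω1, hω2, hω3]
        ring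
      calc φhat t h ≤ᵐ[μ] μ[fun ω => Z ω * h ω|𝓕 t] := hub_h Z hZ
        _ ≤ᵐ[μ] μ[fun ω => Z ω * ((a : ℝ) * φ s X ω + b)|𝓕 t] := hce1
        _ =ᵐ[μ] fun ω => (a : ℝ) * (μ[fun ω => Z ω * φ s X ω|𝓕 t]) ω + b := hce2
    rcases eq_or_lt_of_le ha with ha0 | hapos
    · -- a = 0 : directly φhat t h ≤ b
      obtain ⟨Z, hZ⟩ := hDne t
      filter_upwards [step1 Z hZ] with ω hω
      rw [← ha0] at hω ⊢
      simpa using hω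
    · -- a > 0 : use the greatest-lower-bound property with W = (φhat t h - b)/a
      set W : Ω → ℝ := fun ω => (φhat t h ω - b) / a with hW
      have hWlb : ∀ Z ∈ D t, W ≤ᵐ[μ] μ[fun ω => Z ω * φ s X ω|𝓕 t] := by
        intro Z hZ
        filter_upwards [step1 Z hZ] with ω hω
        rw [hW]
        rw [div_le_iff₀ hapos]
        nlinarith [hω]
      have h1 : W ≤ᵐ[μ] φhat t (φ s X) := hlb_m W hWlb
      have h2 : φhat t (φ s X) ≤ᵐ[μ] φ t X := hTC t s hts hsT X
      filter_upwards [h1, h2] with ω hω1 hω2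
      have : (φhat t h ω - b) / a ≤ φ t X ω := le_trans hω1 hω2
      rw [div_le_iff₀ hapos] at this
      nlinarith [this]
  -- combine over countably many rational lines
  have hall : ∀ᵐ ω ∂μ, ∀ a b : ℚ, 0 ≤ (a : ℝ) →
      (∀ x : ℝ, |x| ≤ M → g x ≤ a * x + b) → φhat t h ω ≤ (a : ℝ) * φ t X ω + b := by
    rw [MeasureTheory.ae_all_iff]
    intro a
    rw [MeasureTheory.ae_all_iff]
    intro b
    by_cases h1 : 0 ≤ (a : ℝ)
    · by_cases h2 : ∀ x : ℝ, |x| ≤ M → g x ≤ a * x + b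
      · filter_upwards [key a b h1 h2] with ω hω _ _
        exact hω
      · filter_upwards with ω _ h2'
        exact absurd h2' h2
    · filter_upwards with ω h1'
      exact absurd h1' h1
  filter_upwards [hall] with ω hω
  exact concave_pointwise_le g hgmono hgconc M (φ t X ω) (φhat t h ω) (hCtM ω) hω
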